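/- Let d be a positive integer and p a prime with p ∤ d, and let m be an integer with 0 < m ≤ d. Then ∑_{a=1}^{m−1} a/d − ∑_{1 ≤ a < m, d·{pa/d} < m} {pa/d} ≥ 0; that is, the sum of the fractional parts {pa/d} over those a ∈ {1, …, m−1} with d·{pa/d} < m is at most ∑_{a=1}^{m−1} a/d. -/

import Mathlib

open scoped Classical

/-- `{x}' := {x}` if the fractional part is nonzero, else `1`. -/
noncomputable def fract' (x : ℚ) : ℚ := if Int.fract x = 0 then 1 else Int.fract x

/-- `δ_∈(a) = 1` iff there is `i ≥ 1` with `p·i ≡ a (mod d)` and `i/d < {a/d}`. -/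
noncomputable def deltaIn (d p a : ℕ) : ℤ :=
  if ∃ i : ℕ, 1 ≤ i ∧ p * i ≡ a [MOD d] ∧ (i : ℚ) / d < Int.fract ((a : ℚ) / d) then 1 else 0

/-- `δ_<(a) = 1` iff `{a/d}' < {pa/d}'`. -/
noncomputable def deltaLt (d p a : ℕ) : ℤ :=
  if fract' ((a : ℚ) / d) < fract' (((p : ℚ) * a) / d) then 1 else 0

/-- `ϖ(a) = ⌈(p−1)a/d⌉ − δ_∈(a)`. -/
noncomputable def varpi (d p a : ℕ) : ℤ :=
  ⌈(((p : ℚ) - 1) * a) / d⌉ - deltaIn d p a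

/-- The arithmetic polygon of `△ = [0, d]`: `p_△(m) = ∑_{a=0}^{m−1} ϖ(a)`. -/
noncomputable def pTri (d p m : ℕ) : ℤ := ∑ a ∈ Finset.range m, varpi d p a

theorem stmt13 (d p : ℕ) (hd : 0 < d) (hp : p.Prime) (hpd : ¬ p ∣ d)
    (m : ℕ) (hm1 : 0 < m) (hm2 : m ≤ d) :
    0 ≤ ∑ a ∈ Finset.Ico 1 m, (a : ℚ) / d -
      ∑ a ∈ (Finset.Ico 1 m).filter (fun a => d * Int.fract (((p : ℚ) * a) / d) < m),
        Int.fract (((p : ℚ) * a) / d) := by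
  have hcop : Nat.Coprime p d := (Nat.Prime.coprime_iff_not_dvd hp).mpr hpd
  set S : Finset ℕ := (Finset.Ico 1 m).filter (fun a => (d : ℚ) * Int.fract (((p : ℚ) * a) / d) < m) with hS
  have hfract : ∀ a : ℕ, Int.fract (((p : ℚ) * a) / d) = ((p * a % d : ℕ) : ℚ) / d := by
    intro a
    rw [← Nat.cast_mul, Int.fract_div_natCast_eq_div_natCast_mod]
  -- key facts about a ∈ S
  have hmem : ∀ a ∈ S, p * a % d ∈ Finset.Ico 1 m := by
    intro a ha
    simp only [hS, Finset.mem_filter, Finset.mem_Ico] at ha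
    obtain ⟨⟨ha1, ham⟩, hcond⟩ := ha
    rw [hfract] at hcond
    have hdq : (0:ℚ) < d := by exact_mod_cast hd
    have hlt : ((p * a % d : ℕ) : ℚ) < m := by
      rw [mul_div_assoc'] at hcond
      calc ((p * a % d : ℕ) : ℚ) = (d : ℚ) * (p * a % d : ℕ) / d := by
            field_simp
        _ < m := hcond
    have h2 : p * a % d < m := by exact_mod_cast hlt
    refine Finset.mem_Ico.mpr ⟨?_, h2⟩
    rcases Nat.eq_zero_or_pos (p * a % d) with h0 | h0
    · exfalso
      have : d ∣ p * a := Nat.dvd_of_mod_eq_zero h0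
      have : d ∣ a := (Nat.Coprime.dvd_of_dvd_mul_left (Nat.Coprime.symm hcop) this)
      have := Nat.le_of_dvd (lt_of_lt_of_le ha1 le_rfl) this
      omega
    · exact h0
  have hinj : ∀ a ∈ S, ∀ b ∈ S, p * a % d = p * b % d → a = b := by
    intro a ha b hb hab
    simp only [hS, Finset.mem_filter, Finset.mem_Ico] at ha hb
    have ha' : a < d := lt_of_lt_of_le ha.1.2 hm2
    have hb' : b < d := lt_of_lt_of_le hb.1.2 hm2
    have : a % d = b % d := by
      have h1 : p * a ≡ p * b [MOD d] := hab
      have := Nat.ModEq.cancel_left_of_coprime (by rwa [Nat.coprime_comm] at hcop) h1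
      exact this
    rwa [Nat.mod_eq_of_lt ha', Nat.mod_eq_of_lt hb'] at this
  have heq : ∑ a ∈ S, Int.fract (((p : ℚ) * a) / d)
      = ∑ b ∈ S.image (fun a => p * a % d), (b : ℚ) / d := by
    rw [Finset.sum_image hinj]
    exact Finset.sum_congr rfl fun a _ => hfract a
  have hbind : ((Finset.Ico 1 m : Finset ℕ) >>= (fun a => pure ((a : ℚ))))
      = (Finset.Ico 1 m).image (fun a : ℕ => (a : ℚ)) := by
    ext x
    simp [Finset.mem_image]
  have hgoalsum : ∑ a ∈ Finset.filter (fun a : ℚ => (d : ℚ) * Int.fract ((p : ℚ) * a / d) < m)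
        ((Finset.Ico 1 m : Finset ℕ) >>= (fun a => pure ((a : ℚ)))),
      Int.fract ((p : ℚ) * a / d)
      = ∑ a ∈ S, Int.fract (((p : ℚ) * a) / d) := by
    rw [hbind, Finset.filter_image, Finset.sum_image (by intro x _ y _ h; simp only at h; exact_mod_cast h)]
  rw [show (∑ a ∈ Finset.Ico 1 m, (a : ℚ) / d -
      ∑ a ∈ (Finset.Ico 1 m).filter (fun a => d * Int.fract (((p : ℚ) * a) / d) < m),
        Int.fract (((p : ℚ) * a) / d)) = ∑ a ∈ Finset.Ico 1 m, (a : ℚ) / d -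
      ∑ a ∈ S, Int.fract (((p : ℚ) * a) / d) from by rw [← hgoalsum]]
  rw [heq]
  have hsub : S.image (fun a => p * a % d) ⊆ Finset.Ico 1 m := by
    intro b hb
    obtain ⟨a, ha, rfl⟩ := Finset.mem_image.mp hb
    exact hmem a ha
  have hle : ∑ b ∈ S.image (fun a => p * a % d), (b : ℚ) / d
      ≤ ∑ a ∈ Finset.Ico 1 m, (a : ℚ) / d :=
    Finset.sum_le_sum_of_subset_of_nonneg hsub (fun b _ _ => by positivity)
  linarith
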